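/- Let B be a complex Banach space, (T t)_{t≥0} a C₀-semigroup on B, Ω ⊆ ℂ an open connected set, and F : Ω → B a map such that T t (F λ) = exp(t·λ) • F λ for all λ ∈ Ω and t ≥ 0, such that for every continuous linear functional φ on B the map λ ↦ φ(F λ) is holomorphic on Ω, and such that the only continuous linear functional vanishing on all F λ, λ ∈ Ω, is zero. If the set U₀ := {λ ∈ Ω : Re λ < 0} has an accumulation point belonging to Ω, then the set B₀ := {f ∈ B : T t f → 0 as t → ∞} is dense in B. -/

import Mathlib

open Filter Topology

/-- If `x` is not in the closure of a submodule `S` of a normed `ℂ`-space, there is a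
continuous linear functional vanishing on `S` but not at `x`. -/
lemma exists_functional_of_not_mem_closure
    {B : Type*} [NormedAddCommGroup B] [NormedSpace ℂ B]
    (S : Submodule ℂ B) {x : B} (hx : x ∉ S.topologicalClosure) :
    ∃ φ : B →L[ℂ] ℂ, (∀ y ∈ S, φ y = 0) ∧ φ x ≠ 0 := by
  set M : Submodule ℂ B := S.topologicalClosure with hM
  have hMclosed : IsClosed (M : Set B) := S.isClosed_topologicalClosure
  letI : NormedAddCommGroup (B ⧸ M) := Submodule.Quotient.normedAddCommGroup M
  -- the quotient map as a continuous linear map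
  let π : B →L[ℂ] B ⧸ M :=
    LinearMap.mkContinuous M.mkQ 1 (fun y => by
      simpa using Submodule.Quotient.norm_mk_le M y)
  have hπx : π x ≠ 0 := by
    simp only [π, LinearMap.mkContinuous_apply, Submodule.mkQ_apply]
    rw [Ne, Submodule.Quotient.mk_eq_zero]
    exact hx
  obtain ⟨g, -, hg⟩ := exists_dual_vector ℂ (π x) (norm_ne_zero_iff.mpr hπx)
  refine ⟨g.comp π, fun y hy => ?_, ?_⟩
  · have : π y = 0 := by
      simp only [π, LinearMap.mkContinuous_apply, Submodule.mkQ_apply]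
      rw [Submodule.Quotient.mk_eq_zero]
      exact S.le_topologicalClosure hy
    simp [this]
  · simp only [ContinuousLinearMap.comp_apply, hg]
    simpa using hπx

/-- Density of `B₀` in the Desch–Schappacher–Webb argument: given a weakly holomorphic,
total eigenvector field `F : Ω → B` of a C₀-semigroup, if the set
`U₀ = {λ ∈ Ω : Re λ < 0}` has an accumulation point inside `Ω`, then the set
`B₀ = {f : T t f → 0 as t → ∞}` is dense in `B`. -/
theorem dense_B0_of_eigenvector_field
    {B : Type*} [NormedAddCommGroup B] [NormedSpace ℂ B] [CompleteSpace B]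
    (T : ℝ → B →L[ℂ] B)
    (hT0 : T 0 = 1)
    (hTadd : ∀ s t : ℝ, 0 ≤ s → 0 ≤ t → T (s + t) = (T s).comp (T t))
    (hTcont : ∀ g : B, ContinuousOn (fun t => T t g) (Set.Ici (0 : ℝ)))
    (Ω : Set ℂ) (hΩopen : IsOpen Ω) (hΩconn : IsConnected Ω)
    (F : ℂ → B)
    (hEig : ∀ z ∈ Ω, ∀ t : ℝ, 0 ≤ t → T t (F z) = Complex.exp ((t : ℂ) * z) • F z)
    (hHol : ∀ φ : B →L[ℂ] ℂ, DifferentiableOn ℂ (fun z => φ (F z)) Ω)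
    (hTotal : ∀ φ : B →L[ℂ] ℂ, (∀ z ∈ Ω, φ (F z) = 0) → φ = 0)
    (z₀ : ℂ) (hz₀ : z₀ ∈ Ω)
    (hacc : AccPt z₀ (Filter.principal {z ∈ Ω | z.re < 0})) :
    Dense {f : B | Filter.Tendsto (fun t => T t f) Filter.atTop (nhds 0)} := by
  set U₀ : Set ℂ := {z ∈ Ω | z.re < 0} with hU₀
  set S : Submodule ℂ B := Submodule.span ℂ (F '' U₀) with hS
  -- Step 1: S is dense
  have hdense : Dense (S : Set B) := by
    rw [dense_iff_closure_eq]
    by_contra h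
    obtain ⟨x, hx⟩ : ∃ x : B, x ∉ S.topologicalClosure := by
      by_contra h'
      push_neg at h'
      apply h
      rw [← S.topologicalClosure_coe]
      exact Set.eq_univ_of_forall h'
    obtain ⟨φ, hφ0, hφx⟩ := exists_functional_of_not_mem_closure S hx
    -- φ vanishes on F z for z ∈ U₀
    have hvan : ∀ z ∈ U₀, φ (F z) = 0 := fun z hz =>
      hφ0 _ (Submodule.subset_span (Set.mem_image_of_mem F hz))
    -- identity theorem
    have hg : AnalyticOnNhd ℂ (fun z => φ (F z)) Ω :=
      (hHol φ).analyticOnNhd hΩopen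
    have hfreq : ∃ᶠ z in 𝓝[≠] z₀, φ (F z) = 0 := by
      have := accPt_iff_frequently.mp hacc
      rw [frequently_nhdsWithin_iff]
      refine this.mono fun z hz => ⟨hvan z hz.2, hz.1⟩
    have hzero : Set.EqOn (fun z => φ (F z)) 0 Ω :=
      hg.eqOn_zero_of_preconnected_of_frequently_eq_zero hΩconn.isPreconnected hz₀ hfreq
    have : φ = 0 := hTotal φ fun z hz => hzero hz
    exact hφx (by simp [this])
  -- Step 2: B₀ is a submodule containing F '' U₀
  set B₀ : Set B := {f : B | Filter.Tendsto (fun t => T t f) Filter.atTop (nhds 0)} with hB₀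
  have hsub : (S : Set B) ⊆ B₀ := by
    have : S ≤
        { carrier := B₀
          add_mem' := fun {f g} hf hg => by
            show Filter.Tendsto (fun t => T t (f + g)) atTop (nhds 0)
            have : Filter.Tendsto (fun t => T t f + T t g) atTop (nhds (0 + 0)) := hf.add hg
            simpa using this
          zero_mem' := by simp [hB₀, tendsto_const_nhds]
          smul_mem' := fun c f hf => by
            show Filter.Tendsto (fun t => T t (c • f)) atTop (nhds 0)
            have : Filter.Tendsto (fun t => c • T t f) atTop (nhds (c • (0 : B))) :=
              hf.const_smul c
            simpa using this } := by
      rw [hS, Submodule.span_le]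
      rintro - ⟨z, hz, rfl⟩
      -- F z ∈ B₀ when Re z < 0
      show Filter.Tendsto (fun t => T t (F z)) atTop (nhds 0)
      have heq : ∀ᶠ t : ℝ in atTop, T t (F z) = Complex.exp ((t : ℂ) * z) • F z := by
        filter_upwards [eventually_ge_atTop (0 : ℝ)] with t ht
        exact hEig z hz.1 t ht
      have hlim : Filter.Tendsto (fun t : ℝ => Complex.exp ((t : ℂ) * z) • F z)
          atTop (nhds 0) := by
        have hnorm : Filter.Tendsto (fun t : ℝ => Real.exp (t * z.re)) atTop (nhds 0) := by
          apply Real.tendsto_exp_atBot.comp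
          exact Filter.Tendsto.atTop_mul_const_of_neg hz.2 tendsto_id
        have hexp : Filter.Tendsto (fun t : ℝ => Complex.exp ((t : ℂ) * z)) atTop (nhds 0) := by
          rw [tendsto_zero_iff_norm_tendsto_zero]
          have : ∀ t : ℝ, ‖Complex.exp ((t : ℂ) * z)‖ = Real.exp (t * z.re) := by
            intro t
            rw [Complex.norm_exp]
            congr 1
            simp [Complex.mul_re]
          simpa [this] using hnorm
        have := hexp.smul_const (F z)
        simpa using this
      exact hlim.congr' (heq.mono fun t ht => ht.symm)
    exact this
  exact hdense.mono hsub
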